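/- arXiv:2108.11103 — 2 statements merged into one kernel-verified Lean document; each statement's English description precedes it below -/
import Mathlib

section
/- Let (A, R) be a Rota–Baxter algebra of weight 1 over a field K of characteristic zero, regard A as a Lie algebra under the commutator [x, y] = xy − yx, let U(A) be its universal enveloping algebra with canonical embedding ι : A → U(A), and for x ∈ A define the Grossman–Larson powers x^{∗0} := 1 and x^{∗(n+1)} := ι(x)·x^{∗n} + ι(R(x))·x^{∗n} − x^{∗n}·ι(R(x)) in U(A). Then in the formal power series ring U(A)⟦t⟧, the n-th formal derivative with respect to t of the product exp(−t·ι(R̃(x)))·exp(−t·ι(R(x))) equals exp(−t·ι(R̃(x)))·x^{∗n}·exp(−t·ι(R(x))) for every n ≥ 0, where R̃ := −id_A − R (so that −R̃(x) = x + R(x)) and exp(−t·ι(R̃(x))) := Σ_{n≥0} tⁿ·ι(x + R(x))ⁿ/n!, exp(−t·ι(R(x))) := Σ_{n≥0} tⁿ·(−ι(R(x)))ⁿ/n!. -/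
attribute [local instance 100] LieRing.ofAssociativeRing

/-- Regard the ring `A` as a Lie algebra under the commutator; `ι` is the canonical embedding
into the universal enveloping algebra. -/
noncomputable abbrev ueι (K : Type*) {A : Type*} [Field K] [Ring A] [Algebra K A] :
    A →ₗ⁅K⁆ UniversalEnvelopingAlgebra K A :=
  UniversalEnvelopingAlgebra.ι K

/-- The `n`-th Grossman–Larson power `x^{∗n}` of `x ∈ A` in `U(A)`, for the post-Lie structure
`x ▷ y = [R x, y]` of a weight-one Rota–Baxter algebra `(A, R)`:
`x^{∗0} = 1`, `x^{∗(n+1)} = x ∗ x^{∗n} = ι x · x^{∗n} + ι (R x) · x^{∗n} - x^{∗n} · ι (R x)`. -/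
noncomputable def glPow {K A : Type*} [Field K] [CharZero K] [Ring A] [Algebra K A]
    (R : A →ₗ[K] A) (x : A) : ℕ → UniversalEnvelopingAlgebra K A
  | 0 => 1
  | n + 1 =>
      ueι K x * glPow R x n + ueι K (R x) * glPow R x n - glPow R x n * ueι K (R x)

/-- The formal derivative `d/dt` on `S⟦t⟧` (coefficientwise, valid over a noncommutative
ring). -/
noncomputable def psDeriv {S : Type*} [Ring S] (f : PowerSeries S) : PowerSeries S :=
  PowerSeries.mk fun n => (n + 1 : ℕ) • PowerSeries.coeff (R := S) (n + 1) f

/-- The power series `exp(t·u) = Σ_{n≥0} tⁿ·uⁿ/n!` in `S⟦t⟧`, for `u` in a `K`-algebra `S`. -/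
noncomputable def expSeries (K : Type*) {S : Type*} [Field K] [CharZero K] [Ring S]
    [Algebra K S] (u : S) : PowerSeries S :=
  PowerSeries.mk fun n => ((n.factorial : K)⁻¹) • u ^ n

lemma psDeriv_mul {S : Type*} [Ring S] (f g : PowerSeries S) :
    psDeriv (f * g) = psDeriv f * g + f * psDeriv g := by
  ext n
  simp only [psDeriv, PowerSeries.coeff_mk, map_add, PowerSeries.coeff_mul,
    Finset.Nat.sum_antidiagonal_eq_sum_range_succ_mk, PowerSeries.coeff_mk]
  rw [Finset.smul_sum]
  have hsplit : ∀ k ∈ Finset.range (n + 2),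
      (n + 1) • (PowerSeries.coeff k f * PowerSeries.coeff (n + 1 - k) g)
        = k • (PowerSeries.coeff k f * PowerSeries.coeff (n + 1 - k) g)
          + (n + 1 - k) • (PowerSeries.coeff k f * PowerSeries.coeff (n + 1 - k) g) := by
    intro k hk
    rw [← add_nsmul]
    congr 1
    simp only [Finset.mem_range] at hk
    omega
  rw [Finset.sum_congr rfl hsplit, Finset.sum_add_distrib]
  congr 1
  · rw [Finset.sum_range_succ']
    simp only [zero_smul, add_zero, Nat.succ_sub_succ]
    apply Finset.sum_congr rfl
    intro k hk
    rw [smul_mul_assoc]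
  · rw [Finset.sum_range_succ]
    simp only [Nat.sub_self, zero_smul, add_zero]
    apply Finset.sum_congr rfl
    intro k hk
    simp only [Finset.mem_range] at hk
    have h1 : n + 1 - k = n - k + 1 := by omega
    rw [h1, mul_smul_comm]

lemma psDeriv_C {S : Type*} [Ring S] (s : S) :
    psDeriv (PowerSeries.C (R := S) s) = 0 := by
  ext n
  simp [psDeriv, PowerSeries.coeff_C]

lemma psDeriv_exp {K S : Type*} [Field K] [CharZero K] [Ring S] [Algebra K S] (u : S) :
    psDeriv (expSeries K u) = expSeries K u * PowerSeries.C (R := S) u := by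
  ext n
  simp only [psDeriv, expSeries, PowerSeries.coeff_mk, PowerSeries.coeff_mul_C,
    smul_mul_assoc, ← pow_succ]
  rw [← Nat.cast_smul_eq_nsmul K, smul_smul]
  congr 1
  have h0 : ((n + 1 : ℕ) : K) ≠ 0 := Nat.cast_ne_zero.mpr (Nat.succ_ne_zero n)
  have h1 : ((n.factorial : K)) ≠ 0 := Nat.cast_ne_zero.mpr (Nat.factorial_ne_zero n)
  rw [Nat.factorial_succ, Nat.cast_mul]
  field_simp

lemma C_mul_exp {K S : Type*} [Field K] [CharZero K] [Ring S] [Algebra K S] (u : S) :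
    PowerSeries.C (R := S) u * expSeries K u = expSeries K u * PowerSeries.C (R := S) u := by
  ext n
  simp only [expSeries, PowerSeries.coeff_mul_C, PowerSeries.coeff_C_mul,
    PowerSeries.coeff_mk, smul_mul_assoc, mul_smul_comm, ← pow_succ, ← pow_succ']

/-- For a Rota–Baxter algebra `(A, R)` of weight `1` over a field `K` of
characteristic zero, with `R̃ := -id - R` (so `-R̃ x = x + R x`), the `n`-th formal derivative
of `exp(-t·ι(R̃ x)) · exp(-t·ι(R x))` in `U(A)⟦t⟧` equals
`exp(-t·ι(R̃ x)) · x^{∗n} · exp(-t·ι(R x))`, where `x^{∗n}` is the `n`-th Grossman–Larson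
power of `x`. -/
theorem deriv_of_exp_product_eq_gl_power {K A : Type*} [Field K] [CharZero K]
    [Ring A] [Algebra K A] (R : A →ₗ[K] A)
    (hRB : ∀ x y : A, R x * R y = R (R x * y + x * R y + x * y)) (x : A) :
    ∀ n : ℕ,
      psDeriv^[n] (expSeries K (ueι K (x + R x)) * expSeries K (-(ueι K (R x)))) =
        expSeries K (ueι K (x + R x)) *
          PowerSeries.C (R := UniversalEnvelopingAlgebra K A) (glPow R x n) *
          expSeries K (-(ueι K (R x))) := by
  intro n
  induction n with
  | zero => simp [glPow]
  | succ n ih =>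
      have hg : glPow R x (n + 1) =
          (ueι K (x + R x)) * glPow R x n + glPow R x n * (-(ueι K (R x))) := by
        show ueι K x * glPow R x n + ueι K (R x) * glPow R x n
            - glPow R x n * ueι K (R x) = _
        rw [map_add]
        noncomm_ring
      rw [Function.iterate_succ_apply', ih, psDeriv_mul, psDeriv_mul, psDeriv_C, psDeriv_exp,
        psDeriv_exp, mul_zero, add_zero, hg]
      simp only [map_add, map_mul]
      rw [← C_mul_exp (K := K) (-(ueι K (R x)))]
      noncomm_ring
end

section
/- Let (A, R) be a Rota–Baxter algebra of weight 1 over a field K of characteristic zero, regard A as a Lie algebra under the commutator [x, y] = xy − yx, let U(A) be its universal enveloping algebra with canonical embedding ι : A → U(A), and for a ∈ A and Y ∈ U(A) write a ∗ Y := ι(a)·Y + ι(R(a))·Y − Y·ι(R(a)). Define the post-Lie Magnus coefficients of x ∈ A by χ^{(1)}(x) := ι(x) and, for n ≥ 2, χ^{(n)}(x) := ι(x)ⁿ/n! − Σ_{k=2}^{n} (1/k!) Σ_{p₁+⋯+p_k = n, pᵢ > 0} χ^{(p₁)}(x) ∗ ( χ^{(p₂)}(x) ∗ ( ⋯ ∗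 χ^{(p_k)}(x) ) ), where each χ^{(p)}(x) lies in ι(A) so the products are defined by the formula above extended linearly in the left argument. Then, writing x ▷ y := R(x)y − yR(x) and [a, b] := ab − ba in A, one has χ^{(2)}(x) = −(1/2)·ι(x ▷ x) and χ^{(3)}(x) = ι( (1/4)·(x ▷ x) ▷ x + (1/12)·x ▷ (x ▷ x) + (1/12)·[x ▷ x, x] ). -/
attribute [local instance 100] LieRing.ofAssociativeRing

/-- The Grossman–Larson product `a ∗ Y = ι a · Y + ι (R a) · Y - Y · ι (R a)` of a primitive
element `ι a`, `a ∈ A`, with `Y ∈ U(A)`, for the post-Lie structure `x ▷ y = [R x, y]` of a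
weight-one Rota–Baxter algebra `(A, R)`. -/
noncomputable def starA {K A : Type*} [Field K] [CharZero K] [Ring A] [Algebra K A]
    (R : A →ₗ[K] A) (a : A) (Y : UniversalEnvelopingAlgebra K A) :
    UniversalEnvelopingAlgebra K A :=
  ueι K a * Y + ueι K (R a) * Y - Y * ueι K (R a)

/-- Let `(A, R)` be a Rota–Baxter algebra of weight `1` over a field `K` of
characteristic zero and `x ∈ A`. Let `c n ∈ A` represent the post-Lie Magnus coefficients
`χ^{(n)}(x) = ι (c n)` (each lies in `ι(A)`), determined by `c 1 = x` and, for `n ≥ 2`,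
`ι (c n) = ι(x)ⁿ/n! - Σ_{k=2}^{n} (1/k!) Σ_{p₁+⋯+p_k=n, pᵢ>0}
  χ^{(p₁)}(x) ∗ (χ^{(p₂)}(x) ∗ (⋯ ∗ χ^{(p_k)}(x)))`,
the nested products being taken with the Grossman–Larson product of primitive elements
(note `a ∗ 1 = ι a`, so the nested product is a fold of `∗` ending at `1`). Then
`χ^{(2)}(x) = -(1/2)·ι(x ▷ x)` and
`χ^{(3)}(x) = ι((1/4)·(x ▷ x) ▷ x + (1/12)·x ▷ (x ▷ x) + (1/12)·[x ▷ x, x])`,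
where `x ▷ y = R(x)y - yR(x)` and `[a, b] = ab - ba` in `A`. -/
theorem post_lie_magnus_low_order_coefficients {K A : Type*} [Field K] [CharZero K]
    [Ring A] [Algebra K A] (R : A →ₗ[K] A)
    (hRB : ∀ x y : A, R x * R y = R (R x * y + x * R y + x * y))
    (x : A) (c : ℕ → A) (hc1 : c 1 = x)
    (hcrec : ∀ n : ℕ, 2 ≤ n →
      ueι K (c n) = ((n.factorial : K)⁻¹) • (ueι K x) ^ n -
        ∑ k ∈ Finset.Icc 2 n, ((k.factorial : K)⁻¹) •
          ∑ p ∈ (Finset.Nat.antidiagonalTuple k n).filter (fun p => ∀ i, p i ≠ 0),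
            (List.ofFn fun i => c (p i)).foldr (starA R) 1) :
    let trd : A → A → A := fun a b => R a * b - b * R a
    ueι K (c 2) = -((2 : K)⁻¹) • ueι K (trd x x) ∧
    ueι K (c 3) = ueι K (((4 : K)⁻¹) • trd (trd x x) x + ((12 : K)⁻¹) • trd x (trd x x)
      + ((12 : K)⁻¹) • (trd x x * x - x * trd x x)) := by
  intro trd
  have htrd : ∀ a b : A, trd a b = R a * b - b * R a := fun _ _ => rfl
  have hinj : Function.Injective (ueι K (A := A)) := by
    have h : ∀ a : A, UniversalEnvelopingAlgebra.lift K (LieHom.id : A →ₗ⁅K⁆ A) (ueι K a) = a :=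
      fun a => UniversalEnvelopingAlgebra.lift_ι_apply K _ a
    exact Function.LeftInverse.injective h
  have hbr : ∀ a b : A, ueι K (a * b - b * a) = ueι K a * ueι K b - ueι K b * ueι K a := by
    intro a b
    have h := (ueι K (A := A)).map_lie a b
    simpa [Ring.lie_def] using h
  have hA22 : (Finset.Nat.antidiagonalTuple 2 2).filter (fun p => ∀ i, p i ≠ 0)
      = {![1,1]} := by decide
  have hA23 : (Finset.Nat.antidiagonalTuple 2 3).filter (fun p => ∀ i, p i ≠ 0)
      = {![1,2], ![2,1]} := by decide
  have hA33 : (Finset.Nat.antidiagonalTuple 3 3).filter (fun p => ∀ i, p i ≠ 0)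
      = {![1,1,1]} := by decide
  have h2 := hcrec 2 (by norm_num)
  rw [Finset.Icc_self, Finset.sum_singleton, hA22, Finset.sum_singleton] at h2
  simp only [List.ofFn_succ, List.ofFn_zero, List.foldr_cons, List.foldr_nil,
    Matrix.cons_val_zero, Matrix.cons_val_one, Matrix.head_cons, Fin.succ_zero_eq_one,
    hc1, starA, Nat.factorial] at h2
  have part1 : ueι K (c 2) = -((2 : K)⁻¹) • ueι K (trd x x) := by
    rw [h2, htrd, hbr]
    norm_num
    simp only [mul_one, one_mul, pow_two, mul_add, add_mul, mul_sub, sub_mul,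
      smul_sub, smul_add, neg_smul]
    module
  refine ⟨part1, ?_⟩
  have hsm : ∀ (k : K) (a : A), ueι K (k • a) = k • ueι K a :=
    fun k a => (ueι K (A := A)).toLinearMap.map_smul k a
  have hadd : ∀ (a b : A), ueι K (a + b) = ueι K a + ueι K b :=
    fun a b => (ueι K (A := A)).toLinearMap.map_add a b
  have hc2 : c 2 = (-(2 : K)⁻¹) • (R x * x - x * R x) := by
    apply hinj
    rw [part1, htrd, hsm]
  have h3 := hcrec 3 (by norm_num)
  have hIcc : Finset.Icc 2 3 = {2, 3} := by decide
  rw [hIcc, Finset.sum_insert (by decide), Finset.sum_singleton, hA23, hA33,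
    Finset.sum_insert (by decide), Finset.sum_singleton, Finset.sum_singleton] at h3
  have hf2 : ((Nat.factorial 2 : ℕ) : K)⁻¹ = (2 : K)⁻¹ := by norm_num [Nat.factorial]
  have hf3 : ((Nat.factorial 3 : ℕ) : K)⁻¹ = (6 : K)⁻¹ := by norm_num [Nat.factorial]
  rw [hf2, hf3] at h3
  simp only [List.ofFn_succ, List.ofFn_zero, List.foldr_cons, List.foldr_nil,
    Matrix.cons_val_zero, Matrix.cons_val_one, Matrix.head_cons, Fin.succ_zero_eq_one,
    Matrix.cons_val_succ, hc1, hc2, starA, map_smul, hsm] at h3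
  rw [h3]
  simp only [htrd]
  simp only [hadd, hsm, hbr]
  simp only [mul_one, one_mul, smul_smul, neg_smul, smul_neg, mul_add, add_mul,
    mul_sub, sub_mul, smul_add, smul_sub, smul_mul_assoc, mul_smul_comm,
    pow_succ, pow_zero, neg_mul, mul_neg, neg_neg, mul_assoc]
  module
end
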